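/- Let γ > 0 and 0 < q1 < q2 < q ≤ 2 be fixed, with α, β real. The set of roots s of Δ(s) = s^q + α·s^{q1} + β·s^{q2} + γ (principal branch, domain ℂ \ (-∞,0]) with Re(s) ≥ 0 is finite. -/

import Mathlib

open Real Complex Filter

lemma aux_abs_cpow (s : ℂ) (hs : s ≠ 0) (w : ℝ) :
    ‖s ^ (w : ℂ)‖ = ‖s‖ ^ w := by
  rw [Complex.norm_cpow_of_ne_zero hs]
  simp

lemma aux_slitPlane_preconnected : IsPreconnected Complex.slitPlane := by
  apply isPreconnected_of_forall (1 : ℂ)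
  intro y hy
  exact ⟨segment ℝ 1 y, Complex.starConvex_one_slitPlane.segment_subset hy,
    left_mem_segment ℝ 1 y, right_mem_segment ℝ 1 y, (convex_segment 1 y).isPreconnected⟩

theorem stmt_17 (q q1 q2 α β γ : ℝ) (h1 : 0 < q1) (h2 : q1 < q2) (h3 : q2 < q) (h4 : q ≤ 2)
    (hγ : 0 < γ) :
    Set.Finite {s : ℂ | 0 ≤ s.re ∧
      s ^ (q : ℂ) + (α : ℂ) * s ^ (q1 : ℂ) + (β : ℂ) * s ^ (q2 : ℂ) + (γ : ℂ) = 0} := by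
  have hq : 0 < q := h1.trans (h2.trans h3)
  have hq2 : 0 < q2 := h1.trans h2
  set f : ℂ → ℂ := fun s => s ^ (q : ℂ) + (α : ℂ) * s ^ (q1 : ℂ) + (β : ℂ) * s ^ (q2 : ℂ) + (γ : ℂ)
    with hf_def
  set S : Set ℂ := {s : ℂ | 0 ≤ s.re ∧
      s ^ (q : ℂ) + (α : ℂ) * s ^ (q1 : ℂ) + (β : ℂ) * s ^ (q2 : ℂ) + (γ : ℂ) = 0} with hS_def
  -- 0 ∉ S
  have hzero : (0 : ℂ) ∉ S := by
    intro h0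
    have := h0.2
    rw [Complex.zero_cpow (by exact_mod_cast hq.ne'),
        Complex.zero_cpow (by exact_mod_cast h1.ne'),
        Complex.zero_cpow (by exact_mod_cast hq2.ne')] at this
    simp at this
    exact hγ.ne' this
  have hSne : ∀ s ∈ S, s ≠ 0 := fun s hs h => hzero (h ▸ hs)
  -- key modulus identity for roots
  have habs_eq : ∀ s ∈ S, (γ : ℝ) ≤ ‖s‖ ^ q + |α| * ‖s‖ ^ q1
      + |β| * ‖s‖ ^ q2 := by
    intro s hs
    have hne := hSne s hs
    have heq : s ^ (q : ℂ) + (α : ℂ) * s ^ (q1 : ℂ) + (β : ℂ) * s ^ (q2 : ℂ) = -(γ : ℂ) := by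
      linear_combination hs.2
    have : (γ : ℝ) = ‖s ^ (q : ℂ) + (α : ℂ) * s ^ (q1 : ℂ) + (β : ℂ) * s ^ (q2 : ℂ)‖ := by
      rw [heq]
      simp [abs_of_pos hγ]
    rw [this]
    calc ‖s ^ (q : ℂ) + (α : ℂ) * s ^ (q1 : ℂ) + (β : ℂ) * s ^ (q2 : ℂ)‖
        ≤ ‖s ^ (q : ℂ)‖ + ‖(α : ℂ) * s ^ (q1 : ℂ)‖
          + ‖(β : ℂ) * s ^ (q2 : ℂ)‖ := by
          exact le_trans (norm_add_le _ _) (by gcongr; exact norm_add_le _ _)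
      _ = ‖s‖ ^ q + |α| * ‖s‖ ^ q1 + |β| * ‖s‖ ^ q2 := by
          rw [norm_mul, norm_mul, aux_abs_cpow s hne, aux_abs_cpow s hne, aux_abs_cpow s hne]
          simp [Complex.norm_real]
  have habs_eq2 : ∀ s ∈ S, ‖s‖ ^ q ≤ |α| * ‖s‖ ^ q1
      + |β| * ‖s‖ ^ q2 + γ := by
    intro s hs
    have hne := hSne s hs
    have heq : s ^ (q : ℂ) = -((α : ℂ) * s ^ (q1 : ℂ) + (β : ℂ) * s ^ (q2 : ℂ) + (γ : ℂ)) := by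
      linear_combination hs.2
    have h0 : ‖s‖ ^ q
        = ‖(α : ℂ) * s ^ (q1 : ℂ) + (β : ℂ) * s ^ (q2 : ℂ) + (γ : ℂ)‖ := by
      rw [← aux_abs_cpow s hne, heq, norm_neg]
    rw [h0]
    calc ‖(α : ℂ) * s ^ (q1 : ℂ) + (β : ℂ) * s ^ (q2 : ℂ) + (γ : ℂ)‖
        ≤ ‖(α : ℂ) * s ^ (q1 : ℂ)‖ + ‖(β : ℂ) * s ^ (q2 : ℂ)‖
          + ‖(γ : ℂ)‖ :=
          le_trans (norm_add_le _ _) (by gcongr; exact norm_add_le _ _)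
      _ = |α| * ‖s‖ ^ q1 + |β| * ‖s‖ ^ q2 + γ := by
          rw [norm_mul, norm_mul, aux_abs_cpow s hne, aux_abs_cpow s hne]
          simp [Complex.norm_real, abs_of_pos hγ]
  -- lower bound: roots bounded away from 0
  have htend0 : Tendsto (fun r : ℝ => r ^ q + |α| * r ^ q1 + |β| * r ^ q2) (nhds 0)
      (nhds 0) := by
    have t1 : Tendsto (fun r : ℝ => r ^ q) (nhds 0) (nhds 0) := by
      have := (Real.continuousAt_rpow_const 0 q (Or.inr hq.le)).tendsto
      rwa [Real.zero_rpow hq.ne'] at this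
    have t2 : Tendsto (fun r : ℝ => r ^ q1) (nhds 0) (nhds 0) := by
      have := (Real.continuousAt_rpow_const 0 q1 (Or.inr h1.le)).tendsto
      rwa [Real.zero_rpow h1.ne'] at this
    have t3 : Tendsto (fun r : ℝ => r ^ q2) (nhds 0) (nhds 0) := by
      have := (Real.continuousAt_rpow_const 0 q2 (Or.inr hq2.le)).tendsto
      rwa [Real.zero_rpow hq2.ne'] at this
    have := (t1.add ((t2.const_mul |α|).add (t3.const_mul |β|)))
    simpa [add_assoc] using this
  obtain ⟨ε, hε, hεball⟩ := Metric.eventually_nhds_iff.mp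
    (htend0.eventually_lt_const hγ)
  have hlow : ∀ s ∈ S, ε ≤ ‖s‖ := by
    intro s hs
    by_contra hcon
    push_neg at hcon
    have hd : dist (‖s‖) 0 < ε := by
      rw [Real.dist_eq, sub_zero, _root_.abs_of_nonneg (norm_nonneg s)]
      exact hcon
    exact absurd (habs_eq s hs) (not_le.mpr (hεball hd))
  -- upper bound
  have htendtop : Tendsto (fun r : ℝ => (|α| * r ^ q1 + |β| * r ^ q2 + γ) / r ^ q) atTop
      (nhds 0) := by
    have key : ∀ᶠ r in atTop, |α| * r ^ (-(q - q1)) + |β| * r ^ (-(q - q2)) + γ * r ^ (-q)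
        = (|α| * r ^ q1 + |β| * r ^ q2 + γ) / r ^ q := by
      filter_upwards [eventually_gt_atTop (0 : ℝ)] with r hr
      have hrq : (0:ℝ) < r ^ q := Real.rpow_pos_of_pos hr q
      rw [neg_sub q q1, neg_sub q q2, Real.rpow_sub hr, Real.rpow_sub hr, Real.rpow_neg hr.le]
      field_simp
    have t1 := tendsto_rpow_neg_atTop (y := q - q1) (by linarith)
    have t2 := tendsto_rpow_neg_atTop (y := q - q2) (by linarith)
    have t3 := tendsto_rpow_neg_atTop (y := q) hq
    have := ((t1.const_mul |α|).add (t2.const_mul |β|)).add (t3.const_mul γ)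
    simp only [mul_zero, add_zero, zero_add] at this
    exact (this.congr' key)
  obtain ⟨R, hR⟩ := eventually_atTop.mp (htendtop.eventually_lt_const one_pos)
  have hub : ∀ s ∈ S, ‖s‖ < R := by
    intro s hs
    by_contra hcon
    push_neg at hcon
    have hrpos : (0:ℝ) < ‖s‖ := hε.trans_le (hlow s hs)
    have h1' := hR (‖s‖) hcon
    have hrq : (0:ℝ) < ‖s‖ ^ q := Real.rpow_pos_of_pos hrpos q
    rw [div_lt_one hrq] at h1'
    have := habs_eq2 s hs
    linarith
  -- compact set containing S
  set K : Set ℂ := Metric.closedBall (0:ℂ) R ∩ {z : ℂ | 0 ≤ z.re ∧ ε ≤ ‖z‖} with hK_def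
  have hKclosed : IsClosed ({z : ℂ | 0 ≤ z.re ∧ ε ≤ ‖z‖}) := by
    apply IsClosed.inter
    · exact isClosed_le continuous_const Complex.continuous_re
    · exact isClosed_le continuous_const continuous_norm
  have hKcomp : IsCompact K := (isCompact_closedBall 0 R).inter_right hKclosed
  have hSK : S ⊆ K := by
    intro s hs
    refine ⟨?_, hs.1, hlow s hs⟩
    rw [Metric.mem_closedBall, dist_zero_right]
    exact (hub s hs).le
  -- analyticity on the slit plane
  have hfa : AnalyticOnNhd ℂ f Complex.slitPlane := by
    intro z hz
    have hid : AnalyticAt ℂ (fun w : ℂ => w) z := analyticAt_id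
    have c1 : AnalyticAt ℂ (fun w : ℂ => w ^ (q : ℂ)) z :=
      hid.cpow analyticAt_const hz
    have c2 : AnalyticAt ℂ (fun w : ℂ => w ^ (q1 : ℂ)) z :=
      hid.cpow analyticAt_const hz
    have c3 : AnalyticAt ℂ (fun w : ℂ => w ^ (q2 : ℂ)) z :=
      hid.cpow analyticAt_const hz
    exact ((c1.add (analyticAt_const.mul c2)).add (analyticAt_const.mul c3)).add analyticAt_const
  -- main argument
  by_contra hfin
  have hinf : S.Infinite := hfin
  obtain ⟨z, hzK, hzacc⟩ := hinf.exists_accPt_of_subset_isCompact hKcomp hSK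
  have hzne : z ≠ 0 := by
    intro h
    rw [h] at hzK
    have := hzK.2.2
    simp at this
    linarith
  have hzslit : z ∈ Complex.slitPlane := by
    rw [Complex.mem_slitPlane_iff]
    rcases lt_or_eq_of_le hzK.2.1 with h | h
    · exact Or.inl h
    · refine Or.inr fun him => hzne ?_
      exact Complex.ext h.symm him
  have hfreq : ∃ᶠ w in nhdsWithin z {z}ᶜ, f w = 0 := by
    have := accPt_iff_frequently.mp hzacc
    rw [frequently_nhdsWithin_iff]
    apply this.mono
    intro w ⟨hw1, hw2⟩
    exact ⟨hw2.2, hw1⟩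
  have hEq : Set.EqOn f 0 Complex.slitPlane :=
    hfa.eqOn_zero_of_preconnected_of_frequently_eq_zero aux_slitPlane_preconnected hzslit hfreq
  -- contradiction at a large positive real point
  set t : ℝ := max R 0 + 1 with ht_def
  have htpos : 0 < t := by positivity
  have htslit : (t : ℂ) ∈ Complex.slitPlane := Complex.ofReal_mem_slitPlane.mpr htpos
  have hft : f (t : ℂ) = 0 := hEq htslit
  have htS : (t : ℂ) ∈ S := ⟨by simp [htpos.le], hft⟩
  have := hub _ htS
  rw [Complex.norm_real, Real.norm_eq_abs, abs_of_pos htpos] at this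
  have : R < t := lt_of_le_of_lt (le_max_left R 0) (by simp [ht_def])
  linarith [hub _ htS, le_max_left R 0,
    (by rw [Complex.norm_real, Real.norm_eq_abs, abs_of_pos htpos] : ‖(t:ℂ)‖ = t)]
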